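/- Let (aᵢ) and (bᵢ) be strictly increasing sequences of rational numbers with aᵢ → 1/√2 and bᵢ → 1 - 1/√2, and aᵢ < 1/√2, bᵢ < 1 - 1/√2 for all i. Then for every positive integer n there exists an index i such that ⌈n·aᵢ⌉/n + ⌈n·bᵢ⌉/n > 1. -/

import Mathlib

theorem stmt_17 (a b : ℕ → ℚ) (ha : StrictMono a) (hb : StrictMono b)
    (haub : ∀ i, (a i : ℝ) < 1 / Real.sqrt 2)
    (hbub : ∀ i, (b i : ℝ) < 1 - 1 / Real.sqrt 2)
    (halim : Filter.Tendsto (fun i => (a i : ℝ)) Filter.atTop (nhds (1 / Real.sqrt 2)))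
    (hblim : Filter.Tendsto (fun i => (b i : ℝ)) Filter.atTop (nhds (1 - 1 / Real.sqrt 2)))
    (n : ℕ) (hn : 0 < n) :
    ∃ i, (⌈(n : ℚ) * a i⌉ : ℚ) / n + (⌈(n : ℚ) * b i⌉ : ℚ) / n > 1 := by
  set x : ℝ := (n : ℝ) / Real.sqrt 2 with hx
  have hs2 : (0:ℝ) < Real.sqrt 2 := Real.sqrt_pos.mpr (by norm_num)
  have hnR : (0:ℝ) < (n:ℝ) := by exact_mod_cast hn
  have hxI : Irrational x := by
    have : Irrational (Real.sqrt 2)⁻¹ := irrational_sqrt_two.inv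
    have h2 : Irrational ((n:ℝ) * (Real.sqrt 2)⁻¹) := by
      exact this.natCast_mul hn.ne'
    simpa [hx, div_eq_mul_inv] using h2
  set c : ℤ := ⌈x⌉ with hc
  have hxc : x < c := lt_of_le_of_ne (Int.le_ceil x) (hxI.ne_int c)
  have hc1 : (c:ℝ) - 1 < x := by
    have := Int.ceil_lt_add_one x
    linarith
  -- a side: eventually (a i : ℝ) > (c-1)/n
  have hA : ∀ᶠ i in Filter.atTop, ((c:ℝ) - 1)/n < (a i : ℝ) := by
    apply halim.eventually (lt_mem_nhds ?_)
    rw [div_lt_iff₀ hnR] at *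
    calc ((c:ℝ)-1) < x := hc1
      _ = 1 / Real.sqrt 2 * n := by rw [hx]; ring
  -- b side: need (b i : ℝ) > (n - c)/n
  have hB : ∀ᶠ i in Filter.atTop, ((n:ℝ) - c)/n < (b i : ℝ) := by
    apply hblim.eventually (lt_mem_nhds ?_)
    rw [div_lt_iff₀ hnR]
    have : (1 - 1/Real.sqrt 2) * n = n - x := by rw [hx]; ring
    rw [this]
    linarith
  obtain ⟨i, hia, hib⟩ := (hA.and hB).exists
  -- convert to ℚ
  have ha' : (c:ℚ) - 1 < (n:ℚ) * a i := by
    rw [div_lt_iff₀ hnR] at hia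
    have : ((c:ℝ) - 1) < (n:ℝ) * (a i : ℝ) := by linarith [mul_comm (a i : ℝ) (n:ℝ)]
    exact_mod_cast this
  have hb' : (n:ℚ) - c < (n:ℚ) * b i := by
    rw [div_lt_iff₀ hnR] at hib
    have : ((n:ℝ) - c) < (n:ℝ) * (b i : ℝ) := by linarith [mul_comm (b i : ℝ) (n:ℝ)]
    exact_mod_cast this
  have hca : c ≤ ⌈(n : ℚ) * a i⌉ := by
    rw [Int.le_ceil_iff]
    exact_mod_cast ha'
  have hcb : (n : ℤ) + 1 - c ≤ ⌈(n : ℚ) * b i⌉ := by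
    rw [Int.le_ceil_iff]
    push_cast
    linarith
  refine ⟨i, ?_⟩
  have hnQ : (0:ℚ) < (n:ℚ) := by exact_mod_cast hn
  rw [← add_div, gt_iff_lt, lt_div_iff₀ hnQ, one_mul]
  have : (n:ℤ) + 1 ≤ ⌈(n : ℚ) * a i⌉ + ⌈(n : ℚ) * b i⌉ := by omega
  have h2 : ((n:ℚ) + 1) ≤ ((⌈(n : ℚ) * a i⌉ : ℚ) + (⌈(n : ℚ) * b i⌉ : ℚ)) := by
    exact_mod_cast this
  linarith
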